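/- Let n be a positive integer and 0 ≤ k ≤ ν₂(n), where ν₂(n) is the 2-adic valuation of n. Then the Frobenius number of the numerical semigroup S = ⟨n, n+2⁰, n+2¹, ..., n+2^k⟩ is F(S) = n²/2^k + (k-1)n - 1. -/

import Mathlib

lemma aux_bits_sum : ∀ k : ℕ, ∀ r < 2^k,
    ∑ i ∈ Finset.range k, 2^i * (r / 2^i % 2) = r := by
  intro k
  induction k with
  | zero => intro r hr; interval_cases r; simp
  | succ k ih =>
    intro r hr
    rw [Finset.sum_range_succ']
    have h1 : ∀ i ∈ Finset.range k, 2^(i+1) * (r / 2^(i+1) % 2)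
        = 2 * (2^i * ((r/2) / 2^i % 2)) := by
      intro i _
      rw [pow_succ', Nat.div_div_eq_div_mul]
      ring_nf
    rw [Finset.sum_congr rfl h1, ← Finset.mul_sum,
      ih (r/2) (by omega)]
    simp [Nat.div_add_mod]

lemma aux_key : ∀ k : ℕ, ∀ x : ℕ → ℕ, ∀ m : ℕ,
    (∑ i ∈ Finset.range (k+1), 2^i * x i) + 1 = 2^k * m →
    m + k ≤ (∑ i ∈ Finset.range (k+1), x i) + 1 := by
  intro k
  induction k with
  | zero => intro x m h; simp at h ⊢; omega
  | succ k ih =>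
    intro x m h
    -- peel off index 0
    rw [Finset.sum_range_succ'] at h
    have h2 : ∀ i ∈ Finset.range (k+1), 2^(i+1) * x (i+1)
        = 2 * (2^i * x (i+1)) := by intro i _; rw [pow_succ']; ring
    rw [Finset.sum_congr rfl h2, ← Finset.mul_sum] at h
    set S := ∑ i ∈ Finset.range (k+1), 2^i * x (i+1) with hS
    have hm2 : 2^(k+1) * m = 2 * (2^k * m) := by ring
    rw [hm2] at h
    simp only [pow_zero, one_mul] at h
    have hodd : x 0 % 2 = 1 := by omega
    set u := x 0 / 2 with hu
    have hx0 : x 0 = 2 * u + 1 := by omega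
    have hSu : S + u + 1 = 2^k * m := by omega
    set y : ℕ → ℕ := fun i => if i = 0 then u + x 1 else x (i+1) with hy
    have hAy : (∑ i ∈ Finset.range (k+1), 2^i * y i) = S + u := by
      rw [Finset.sum_range_succ', hS, Finset.sum_range_succ']
      have : ∀ i ∈ Finset.range k, 2^(i+1) * y (i+1) = 2^(i+1) * x (i+2) := by
        intro i _; simp [hy]
      rw [Finset.sum_congr rfl this]
      simp [hy]
      ring
    have hkey := ih y m (by rw [hAy]; omega)
    have hys : (∑ i ∈ Finset.range (k+1), y i)
        = (∑ i ∈ Finset.range k, x (i+2)) + (u + x 1) := by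
      rw [Finset.sum_range_succ']
      have : ∀ i ∈ Finset.range k, y (i+1) = x (i+2) := by intro i _; simp [hy]
      rw [Finset.sum_congr rfl this]
      simp [hy]
    have hxs : (∑ i ∈ Finset.range (k+2), x i)
        = (∑ i ∈ Finset.range k, x (i+2)) + x 1 + x 0 := by
      rw [Finset.sum_range_succ', Finset.sum_range_succ']
    rw [hys] at hkey
    rw [hxs]
    omega

lemma aux_sum_split (n k : ℕ) (x : ℕ → ℕ) :
    ∑ i ∈ Finset.range (k+1), (n + 2^i) * x i
      = n * (∑ i ∈ Finset.range (k+1), x i)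
        + ∑ i ∈ Finset.range (k+1), 2^i * x i := by
  rw [Finset.mul_sum, ← Finset.sum_add_distrib]
  exact Finset.sum_congr rfl fun i _ => by ring

/-- Shifted powers of 2, case k ≤ ν₂(n): the Frobenius number of
⟨n, n+2⁰, n+2¹, …, n+2ᵏ⟩ is n²/2ᵏ + (k-1)n - 1. -/
theorem stmt_14 (n k : ℕ) (hn : 2 ≤ n) (hk : k ≤ padicValNat 2 n) (F : ℕ)
    (hF : IsGreatest {m : ℕ | ¬∃ c : ℕ, ∃ x : ℕ → ℕ,
        m = n * c + ∑ i ∈ Finset.range (k + 1), (n + 2 ^ i) * x i} F) :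
    (F : ℚ) = (n : ℚ) ^ 2 / 2 ^ k + ((k : ℚ) - 1) * n - 1 := by
  have hdvd : 2^k ∣ n :=
    dvd_trans (pow_dvd_pow 2 hk) pow_padicValNat_dvd
  obtain ⟨q, hq⟩ := hdvd
  have h2k : 1 ≤ 2^k := Nat.one_le_two_pow
  have hq1 : 1 ≤ q := by
    rcases Nat.eq_zero_or_pos q with h | h
    · subst h; omega
    · exact h
  have hqk2 : 2 ≤ q + k := by
    rcases Nat.eq_zero_or_pos k with h | h
    · subst h; simp at hq; omega
    · have : 2^1 ≤ 2^k := Nat.pow_le_pow_right (by norm_num) h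
      omega
  set N := (q + k - 2) * n + (n - 1) with hNdef
  -- Part 1: N is not representable
  have hNmem : N ∈ {m : ℕ | ¬∃ c : ℕ, ∃ x : ℕ → ℕ,
      m = n * c + ∑ i ∈ Finset.range (k + 1), (n + 2 ^ i) * x i} := by
    rintro ⟨c, x, hx⟩
    rw [aux_sum_split] at hx
    set W := ∑ i ∈ Finset.range (k+1), x i with hW
    set A := ∑ i ∈ Finset.range (k+1), 2^i * x i with hA
    set T := c + W with hT
    have hNT : N = n * T + A := by rw [hx, hT]; ring
    have hTle : T ≤ q + k - 2 := by
      by_contra hc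
      push_neg at hc
      have : (q + k - 1) * n ≤ n * T := by
        calc (q + k - 1) * n ≤ T * n := Nat.mul_le_mul_right n (by omega)
        _ = n * T := Nat.mul_comm T n
      have hNlt : N < (q + k - 1) * n := by
        have : (q + k - 1) * n = (q + k - 2) * n + n := by
          have : q + k - 1 = (q + k - 2) + 1 := by omega
          rw [this]; ring
        omega
      omega
    set e := q + k - 2 - T with he
    have hAe : A + 1 = (e + 1) * n := by
      have h1 : (q + k - 2) * n = T * n + e * n := by
        have : q + k - 2 = T + e := by omega
        rw [this, add_mul]
      have h2 : n * T = T * n := Nat.mul_comm n T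
      rw [hNdef, h1, h2] at hNT
      have h3 : (e + 1) * n = e * n + n := by ring
      omega
    have hAe2 : A + 1 = 2^k * (q * (e + 1)) := by
      rw [hAe, hq]; ring
    have hkey := aux_key k x (q * (e + 1)) hAe2
    have hq' : q ≤ q * (e + 1) := Nat.le_mul_of_pos_right q (by omega)
    omega
  -- Part 2: everything above N is representable
  have hrep : ∀ m : ℕ, N < m → ∃ c : ℕ, ∃ x : ℕ → ℕ,
      m = n * c + ∑ i ∈ Finset.range (k + 1), (n + 2 ^ i) * x i := by
    intro m hm
    set t := m / n with ht
    set a := m % n with ha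
    have hma : m = n * t + a := (Nat.div_add_mod m n).symm
    have han : a < n := Nat.mod_lt m (by omega)
    have htge : q + k - 1 ≤ t := by
      have h1 : (q + k - 1) * n ≤ m := by
        have : (q + k - 1) * n = (q + k - 2) * n + n := by
          have : q + k - 1 = (q + k - 2) + 1 := by omega
          rw [this]; ring
        omega
      rw [ht]
      exact Nat.le_div_iff_mul_le (by omega) |>.2 h1
    set b := a / 2^k with hb
    set r := a % 2^k with hr
    have hab : a = 2^k * b + r := (Nat.div_add_mod a (2^k)).symm
    have hrlt : r < 2^k := Nat.mod_lt a (by omega)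
    have hbq : b ≤ q - 1 := by
      have : b < q := by
        rw [hb]
        apply Nat.div_lt_of_lt_mul
        have hnq : n = q * 2^k := by rw [hq]; ring
        omega
      omega
    set x : ℕ → ℕ := fun i => if i = k then b else r / 2^i % 2 with hxdef
    have hAx : (∑ i ∈ Finset.range (k+1), 2^i * x i) = a := by
      rw [Finset.sum_range_succ]
      have h1 : ∀ i ∈ Finset.range k, 2^i * x i = 2^i * (r / 2^i % 2) := by
        intro i hi
        simp only [Finset.mem_range] at hi
        simp [hxdef, Nat.ne_of_lt hi]
      rw [Finset.sum_congr rfl h1, aux_bits_sum k r hrlt]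
      have hxk : x k = b := by simp [hxdef]
      rw [hxk]
      omega
    have hWx : (∑ i ∈ Finset.range (k+1), x i) ≤ (q - 1) + k := by
      rw [Finset.sum_range_succ]
      have h1 : ∀ i ∈ Finset.range k, x i ≤ 1 := by
        intro i hi
        simp only [Finset.mem_range] at hi
        simp only [hxdef, Nat.ne_of_lt hi, if_false]
        omega
      have h2 : (∑ i ∈ Finset.range k, x i) ≤ k := by
        calc (∑ i ∈ Finset.range k, x i) ≤ ∑ i ∈ Finset.range k, 1 :=
          Finset.sum_le_sum h1
        _ = k := by simp
      have hxk : x k = b := by simp [hxdef]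
      rw [hxk]
      omega
    set W := ∑ i ∈ Finset.range (k+1), x i with hWdef
    refine ⟨t - W, x, ?_⟩
    rw [aux_sum_split, ← hWdef, hAx]
    have hWt : W ≤ t := by omega
    have hnt : n * (t - W) + n * W = n * t := by
      rw [← Nat.mul_add]
      congr 1
      omega
    omega
  -- F = N
  have hFN : F = N := by
    have h1 : N ≤ F := hF.2 hNmem
    have h2 : F ≤ N := by
      by_contra hc
      push_neg at hc
      exact hF.1 (hrep F hc)
    omega
  -- cast computation
  have hqQ : (q : ℚ) = (n : ℚ) / 2^k := by
    have : (n : ℚ) = 2^k * q := by exact_mod_cast hq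
    rw [this]; field_simp
  rw [hFN, hNdef]
  push_cast [Nat.cast_sub hqk2, Nat.cast_sub (show 1 ≤ n by omega)]
  rw [show ((n:ℚ))^2 / 2^k = (n:ℚ)/2^k * n by ring, ← hqQ]
  ring
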